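/- Let $A$ and $B$ be rings, $f: A \to B$ a ring homomorphism making $B$ a finitely generated projective $A$-module, and set $\omega = \mathrm{Hom}_A(B, A)$ viewed as a $B$-module. Then for every $A$-module $M$ there is a natural isomorphism of $B$-modules $\mathrm{Hom}_A(B, M) \cong \omega \otimes_B (B \otimes_A M)$ when $\omega$ is an invertible $B$-module; i.e., the right adjoint $f^!$ of the forgetful (pushforward) functor is given by $f^!M = f^*M \otimes_B \omega$. -/
import Mathlib


open TensorProduct

/-- For an `A`-algebra `B` and an `A`-module `M`, the `B`-module structure on
`Hom_A(B, M)` given by `(b • φ)(x) = φ(b * x)`. -/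
noncomputable def homFrobModule (A B M : Type) [CommRing A] [CommRing B] [Algebra A B]
    [AddCommGroup M] [Module A M] : Module B (B →ₗ[A] M) where
  smul b φ := φ.comp (LinearMap.mul A B b)
  one_smul φ := by ext x; show φ (1 * x) = φ x; rw [one_mul]
  mul_smul b c φ := by
    ext x
    show φ (b * c * x) = φ (c * (b * x))
    rw [← mul_assoc, mul_comm c b]
  smul_zero b := by ext x; rfl
  smul_add b φ ψ := by ext x; rfl
  add_smul b c φ := by ext x; show φ ((b + c) * x) = φ (b * x) + φ (c * x); rw [add_mul, map_add]
  zero_smul φ := by ext x; show φ (0 * x) = 0; rw [zero_mul, map_zero]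


section FFDAux

variable (A B M : Type) [CommRing A] [CommRing B] [Algebra A B]
  [AddCommGroup M] [Module A M]

/-- The `A`-bilinear map `(b', m) ↦ (x ↦ ψ (b' * x) • m)`. -/
noncomputable def ffdBil (ψ : B →ₗ[A] A) : B →ₗ[A] M →ₗ[A] (B →ₗ[A] M) where
  toFun b' :=
    { toFun := fun m => (ψ.comp (LinearMap.mul A B b')).smulRight m
      map_add' := fun m m' => by
        ext x
        show ψ (b' * x) • (m + m') = ψ (b' * x) • m + ψ (b' * x) • m'
        rw [smul_add]
      map_smul' := fun a m => by
        ext x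
        show ψ (b' * x) • (a • m) = a • (ψ (b' * x) • m)
        rw [smul_comm] }
  map_add' b' b'' := by
    ext m x
    show ψ ((b' + b'') * x) • m = ψ (b' * x) • m + ψ (b'' * x) • m
    rw [add_mul, map_add, add_smul]
  map_smul' a b' := by
    ext m x
    show ψ ((a • b') * x) • m = a • (ψ (b' * x) • m)
    rw [smul_mul_assoc, map_smul, smul_eq_mul, mul_smul]

/-- The `A`-linear map `B ⊗[A] M →ₗ[A] (B →ₗ[A] M)` induced by `ψ`. -/
noncomputable def ffdF (ψ : B →ₗ[A] A) : B ⊗[A] M →ₗ[A] (B →ₗ[A] M) :=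
  TensorProduct.lift (ffdBil A B M ψ)

@[simp] theorem ffdF_tmul (ψ : B →ₗ[A] A) (b' : B) (m : M) (x : B) :
    ffdF A B M ψ (b' ⊗ₜ[A] m) x = ψ (b' * x) • m := rfl

end FFDAux

/-- Module-theoretic duality for a finite flat morphism: if `B` is a
finitely generated projective `A`-module and `ω = Hom_A(B, A)` (with the
`B`-module structure above) is an invertible `B`-module, then for every
`A`-module `M` there is a `B`-module isomorphism
`Hom_A(B, M) ≅ ω ⊗_B (B ⊗_A M)`, i.e. `f^! M = f^* M ⊗ ω`. -/
theorem finite_flat_duality_affine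
    (A B : Type) [CommRing A] [CommRing B] [Algebra A B]
    (hproj : Module.Projective A B) (hfin : Module.Finite A B) :
    letI : Module B (B →ₗ[A] A) := homFrobModule A B A
    -- `ω = Hom_A(B, A)` is invertible as a `B`-module
    (∃ (ω' : Type) (_ : AddCommGroup ω') (_ : Module B ω'),
        Nonempty ((B →ₗ[A] A) ⊗[B] ω' ≃ₗ[B] B)) →
    ∀ (M : Type) (_ : AddCommGroup M) (_ : Module A M),
      letI : Module B (B →ₗ[A] M) := homFrobModule A B M
      Nonempty ((B →ₗ[A] M) ≃ₗ[B] (B →ₗ[A] A) ⊗[B] (B ⊗[A] M)) := by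
  intro _hω M _ _
  letI : Module B (B →ₗ[A] A) := homFrobModule A B A
  letI : Module B (B →ₗ[A] M) := homFrobModule A B M
  classical
  -- smul unfolding lemmas for the custom module structures
  have hsA : ∀ (c : B) (ψ : B →ₗ[A] A) (x : B), (c • ψ) x = ψ (c * x) := fun _ _ _ => rfl
  have hsM : ∀ (c : B) (h : B →ₗ[A] M) (x : B), (c • h) x = h (c * x) := fun _ _ _ => rfl
  have halg : ∀ (a : A) (ψ : B →ₗ[A] A), algebraMap A B a • ψ = a • ψ := by
    intro a ψ
    ext x
    rw [hsA]
    show ψ (algebraMap A B a * x) = a • ψ x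
    rw [← Algebra.smul_def, map_smul]
  -- a finite dual basis of `B` over `A`
  obtain ⟨n, f, g, -, -, hfg⟩ := Module.Finite.exists_comp_eq_id_of_projective A B
  let bb : Fin n → B := fun i => f fun j => if i = j then 1 else 0
  let φ : Fin n → (B →ₗ[A] A) := fun i => (LinearMap.proj i).comp g
  have hdual : ∀ x : B, ∑ i, φ i x • bb i = x := by
    intro x
    have h1 : f (g x) = x := by
      have := LinearMap.ext_iff.mp hfg x
      simpa using this
    have h2 := LinearMap.pi_apply_eq_sum_univ f (g x)
    exact (h2.symm.trans h1 : ∑ i, φ i x • bb i = x)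
  haveI : SMulCommClass B B (B →ₗ[A] M) := by
    constructor
    intro b c h
    ext x
    rw [hsM, hsM, hsM, hsM, ← mul_assoc, ← mul_assoc, mul_comm c b]
  -- B-linear forward map on the second factor
  have hF1smul : ∀ (ψ : B →ₗ[A] A) (c : B) (t : B ⊗[A] M),
      ffdF A B M ψ (c • t) = c • ffdF A B M ψ t := by
    intro ψ c t
    induction t with
    | zero => simp
    | tmul b' m =>
        rw [TensorProduct.smul_tmul']
        ext x
        rw [hsM]
        show ψ (c • b' * x) • m = ψ (b' * (c * x)) • m
        rw [smul_eq_mul]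
        have : c * b' * x = b' * (c * x) := by ring
        rw [this]
    | add t s ht hs => rw [smul_add, map_add, map_add, ht, hs, smul_add]
  let F1 : (B →ₗ[A] A) → (B ⊗[A] M) →ₗ[B] (B →ₗ[A] M) := fun ψ =>
    { toFun := ffdF A B M ψ
      map_add' := map_add _
      map_smul' := hF1smul ψ }
  let F2 : (B →ₗ[A] A) →ₗ[B] ((B ⊗[A] M) →ₗ[B] (B →ₗ[A] M)) :=
    { toFun := F1
      map_add' := by
        intro ψ ψ'
        refine LinearMap.ext fun t => ?_
        induction t with
        | zero => simp
        | tmul b' m =>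
            ext x
            show (ψ + ψ') (b' * x) • m = ψ (b' * x) • m + ψ' (b' * x) • m
            rw [LinearMap.add_apply, add_smul]
        | add t s ht hs =>
            rw [map_add, ht, hs]
            exact (map_add _ t s).symm
      map_smul' := by
        intro c ψ
        refine LinearMap.ext fun t => ?_
        induction t with
        | zero => simp
        | tmul b' m =>
            ext x
            show (c • ψ) (b' * x) • m = ψ (b' * (c * x)) • m
            rw [hsA]
            have : c * (b' * x) = b' * (c * x) := by ring
            rw [this]
        | add t s ht hs =>
            rw [map_add, ht, hs]
            exact (map_add _ t s).symm }
  let F : (B →ₗ[A] A) ⊗[B] (B ⊗[A] M) →ₗ[B] (B →ₗ[A] M) := TensorProduct.lift F2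
  have hFt : ∀ (ψ : B →ₗ[A] A) (t : B ⊗[A] M), F (ψ ⊗ₜ[B] t) = ffdF A B M ψ t :=
    fun _ _ => rfl
  -- the inverse as a plain function
  let G : (B →ₗ[A] M) → (B →ₗ[A] A) ⊗[B] (B ⊗[A] M) := fun h =>
    ∑ i, φ i ⊗ₜ[B] ((1 : B) ⊗ₜ[A] h (bb i))
  have hFG : ∀ h, F (G h) = h := by
    intro h
    ext x
    rw [map_sum]
    have : ∀ i : Fin n, F (φ i ⊗ₜ[B] ((1 : B) ⊗ₜ[A] h (bb i))) = (ffdF A B M (φ i)) ((1 : B) ⊗ₜ[A] h (bb i)) := fun i => rfl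
    calc (∑ i, F (φ i ⊗ₜ[B] ((1 : B) ⊗ₜ[A] h (bb i)))) x
        = ∑ i, φ i (1 * x) • h (bb i) := by
          rw [LinearMap.sum_apply]
          exact Finset.sum_congr rfl fun i _ => rfl
      _ = h (∑ i, φ i x • bb i) := by
          rw [map_sum]
          simp
      _ = h x := by rw [hdual]
  have hGF : ∀ t, G (F t) = t := by
    have hGadd : ∀ h h', G (h + h') = G h + G h' := by
      intro h h'
      simp only [G, LinearMap.add_apply, TensorProduct.tmul_add, TensorProduct.add_tmul]
      rw [Finset.sum_add_distrib]
    intro t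
    induction t with
    | zero => simp [G, map_zero]
    | tmul ψ t =>
        induction t with
        | zero => simp [G, map_zero, TensorProduct.tmul_zero]
        | tmul b' m =>
            have key : ∀ i : Fin n,
                φ i ⊗ₜ[B] ((1 : B) ⊗ₜ[A] (ψ (b' * bb i) • m)) =
                  (ψ (b' * bb i) • φ i) ⊗ₜ[B] ((1 : B) ⊗ₜ[A] m) := by
              intro i
              have h1 : (1 : B) ⊗ₜ[A] (ψ (b' * bb i) • m) =
                  (algebraMap A B (ψ (b' * bb i))) • ((1 : B) ⊗ₜ[A] m) := by
                rw [TensorProduct.smul_tmul', smul_eq_mul, mul_one,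
                  Algebra.algebraMap_eq_smul_one, TensorProduct.smul_tmul]
              rw [h1, ← TensorProduct.smul_tmul, halg]
            have hFval : F (ψ ⊗ₜ[B] (b' ⊗ₜ[A] m)) = ffdF A B M ψ (b' ⊗ₜ[A] m) := rfl
            have hsum : (∑ i, ψ (b' * bb i) • φ i) = b' • ψ := by
              ext x
              rw [LinearMap.sum_apply, hsA]
              have : ∀ i : Fin n, (ψ (b' * bb i) • φ i) x = φ i x • ψ (b' * bb i) := by
                intro i
                rw [LinearMap.smul_apply]
                rw [smul_eq_mul, smul_eq_mul, mul_comm]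
              rw [Finset.sum_congr rfl fun i _ => this i]
              calc ∑ i, φ i x • ψ (b' * bb i)
                  = ψ (∑ i, φ i x • (b' * bb i)) := by rw [map_sum]; simp
                _ = ψ (b' * ∑ i, φ i x • bb i) := by rw [Finset.mul_sum]; congr 1; exact Finset.sum_congr rfl fun i _ => (mul_smul_comm _ _ _).symm
                _ = ψ (b' * x) := by rw [hdual]
            show (∑ i, φ i ⊗ₜ[B] ((1:B) ⊗ₜ[A] (ffdF A B M ψ (b' ⊗ₜ[A] m)) (bb i))) = ψ ⊗ₜ[B] (b' ⊗ₜ[A] m)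
            calc (∑ i, φ i ⊗ₜ[B] ((1:B) ⊗ₜ[A] (ffdF A B M ψ (b' ⊗ₜ[A] m)) (bb i)))
                = ∑ i, (ψ (b' * bb i) • φ i) ⊗ₜ[B] ((1 : B) ⊗ₜ[A] m) := by
                  exact Finset.sum_congr rfl fun i _ => key i
              _ = (∑ i, ψ (b' * bb i) • φ i) ⊗ₜ[B] ((1 : B) ⊗ₜ[A] m) := by
                  rw [TensorProduct.sum_tmul]
              _ = (b' • ψ) ⊗ₜ[B] ((1 : B) ⊗ₜ[A] m) := by rw [hsum]
              _ = ψ ⊗ₜ[B] (b' • ((1 : B) ⊗ₜ[A] m)) := by rw [TensorProduct.smul_tmul]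
              _ = ψ ⊗ₜ[B] (b' ⊗ₜ[A] m) := by
                  rw [TensorProduct.smul_tmul', smul_eq_mul, mul_one]
        | add t s ht hs =>
            rw [TensorProduct.tmul_add, map_add, hGadd, ht, hs]
    | add t s ht hs => rw [map_add, hGadd, ht, hs]
  have hbij : Function.Bijective F := by
    constructor
    · intro t s h
      rw [← hGF t, ← hGF s, h]
    · intro h
      exact ⟨G h, hFG h⟩
  exact ⟨(LinearEquiv.ofBijective F hbij).symm⟩
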